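/- For n ≥ 3, the Smith group of the n×n rook's graph R_n (the cokernel of its adjacency matrix over Z) is isomorphic to (Z/2)^{(n-2)²} ⊕ (Z/2(n-2))^{2n-3} ⊕ Z/(2(n-1)(n-2)). -/

import Mathlib

/-- The adjacency matrix (over `ℤ`) of the `n × n` rook's graph: vertices are
squares of an `n × n` grid, adjacent when distinct and in the same row or column. -/
def rookAdj (n : ℕ) : Matrix (Fin n × Fin n) (Fin n × Fin n) ℤ :=
  fun u v => if u ≠ v ∧ (u.1 = v.1 ∨ u.2 = v.2) then 1 else 0

/-- The Laplacian matrix `L = D - A` of the rook's graph, where `D` is the diagonal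
matrix of vertex degrees. -/
def rookLap (n : ℕ) : Matrix (Fin n × Fin n) (Fin n × Fin n) ℤ :=
  Matrix.diagonal (fun u => ∑ v, rookAdj n u v) - rookAdj n

/-- The adjacency matrix (over `ℤ`) of the complement of the rook's graph. -/
def rookcAdj (n : ℕ) : Matrix (Fin n × Fin n) (Fin n × Fin n) ℤ :=
  fun u v => if u ≠ v ∧ u.1 ≠ v.1 ∧ u.2 ≠ v.2 then 1 else 0

/-- The Laplacian matrix of the complement of the rook's graph. -/
def rookcLap (n : ℕ) : Matrix (Fin n × Fin n) (Fin n × Fin n) ℤ :=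
  Matrix.diagonal (fun u => ∑ v, rookcAdj n u v) - rookcAdj n

namespace RookSmith

/-- indicator -/
def ch (p : Prop) [Decidable p] : ℤ := if p then 1 else 0

@[simp] lemma ch_true {p : Prop} [Decidable p] (h : p) : ch p = 1 := if_pos h
@[simp] lemma ch_false {p : Prop} [Decidable p] (h : ¬ p) : ch p = 0 := if_neg h
lemma ch_not (p : Prop) [Decidable p] : ch (¬ p) = 1 - ch p := by
  by_cases h : p <;> simp [h]

variable (m : ℕ)

abbrev P := Fin (m+3) × Fin (m+3)

def N1 : Fin (m+3) := ⟨m+2, by omega⟩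
def N2 : Fin (m+3) := ⟨m+1, by omega⟩

lemma N2_ne_N1 : (N2 m) ≠ (N1 m) := by simp [N1, N2, Fin.ext_iff]

-- row sum, column sum, total
def Rs (v : P m → ℤ) (i : Fin (m+3)) : ℤ := ∑ j, v (i, j)
def Cs (v : P m → ℤ) (j : Fin (m+3)) : ℤ := ∑ i, v (i, j)
def Tot (v : P m → ℤ) : ℤ := ∑ p, v p

variable {m}

-- single index sum toolkit
lemma sum_ch_mul (a : Fin (m+3)) (f : Fin (m+3) → ℤ) :
    ∑ i, ch (i = a) * f i = f a := by
  simp [ch, ite_mul]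
lemma sum_ch (a : Fin (m+3)) : ∑ i, ch (i = a) = 1 := by simp [ch]
lemma sum_one : ∑ _i : Fin (m+3), (1:ℤ) = (m+3 : ℤ) := by
  simp [Finset.card_univ]

variable (m)

-- the seven basis column families
def colG (a b : Fin (m+3)) : P m → ℤ := fun p =>
  ch (p.1 = a) * ch (p.2 = b) - ch (p.1 = a) * ch (p.2 = N1 m)
    - ch (p.1 = N1 m) * ch (p.2 = b) + ch (p.1 = N1 m) * ch (p.2 = N1 m)
def colU (a : Fin (m+3)) : P m → ℤ := fun p =>
  ch (p.1 = a) * ch (p.2 = N1 m) - ch (p.1 = N1 m) * ch (p.2 = N1 m)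
def colV (b : Fin (m+3)) : P m → ℤ := fun p =>
  ch (p.1 = N1 m) * ch (p.2 = b) - ch (p.1 = N1 m) * ch (p.2 = N1 m)
def colZ : P m → ℤ := fun p => ch (p.1 = N1 m) * ch (p.2 = N1 m)
def colR2 (a : Fin (m+3)) : P m → ℤ := fun p =>
  (ch (p.1 = a) - ch (p.1 = N1 m)) * (ch (¬ p.2 = N1 m) - ch (p.2 = N1 m))
def colR3 (b : Fin (m+3)) : P m → ℤ := fun p =>
  (ch (p.2 = b) - ch (p.2 = N1 m)) * (ch (¬ p.1 = N1 m) - ch (p.1 = N1 m))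
def colR4 : P m → ℤ := fun p =>
  ch (¬ p.1 = N1 m) * ch (p.2 = N1 m) + ch (p.1 = N1 m) * ch (¬ p.2 = N1 m)

/-- the basis matrix: columns indexed by slots -/
def Bmat : Matrix (P m) (P m) ℤ := fun p k =>
  (if k.2 = N1 m then (if k.1 = N1 m then colZ m else colU m k.1)
   else if k.2 = N2 m then (if k.1 = N1 m then colR4 m else colR2 m k.1)
   else if k.1 = N1 m then colV m k.2
   else if k.1 = N2 m then colR3 m k.2
   else colG m k.1 k.2) p

-- the seven coordinate functionals
def lamG (a b : Fin (m+3)) (v : P m → ℤ) : ℤ :=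
  v (a, b) - v (a, N2 m) - v (N2 m, b) + v (N2 m, N2 m)
def lamR2 (a : Fin (m+3)) (v : P m → ℤ) : ℤ := v (a, N2 m)
def lamR3 (b : Fin (m+3)) (v : P m → ℤ) : ℤ := v (N2 m, b) - v (N2 m, N2 m)
def lamU (a : Fin (m+3)) (v : P m → ℤ) : ℤ :=
  Rs m v a - (m+1) * v (a, N2 m) - Cs m v (N2 m)
def lamV (b : Fin (m+3)) (v : P m → ℤ) : ℤ :=
  Cs m v b - (m+1) * (v (N2 m, b) - v (N2 m, N2 m)) - Cs m v (N2 m)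
def lamR4 (v : P m → ℤ) : ℤ := Cs m v (N2 m)
def lamZ (v : P m → ℤ) : ℤ := Tot m v - (2*m+4) * Cs m v (N2 m)

def lam (k : P m) (v : P m → ℤ) : ℤ :=
  if k.2 = N1 m then (if k.1 = N1 m then lamZ m v else lamU m k.1 v)
  else if k.2 = N2 m then (if k.1 = N1 m then lamR4 m v else lamR2 m k.1 v)
  else if k.1 = N1 m then lamV m k.2 v
  else if k.1 = N2 m then lamR3 m k.2 v
  else lamG m k.1 k.2 v

/-- the inverse matrix: rows are the coordinate functionals -/
def Cmat : Matrix (P m) (P m) ℤ := fun k p =>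
  (if k.2 = N1 m then
    (if k.1 = N1 m then 1 - (2*m+4) * ch (p.2 = N2 m)
     else ch (p.1 = k.1) - (m+1) * (ch (p.1 = k.1) * ch (p.2 = N2 m)) - ch (p.2 = N2 m))
   else if k.2 = N2 m then
    (if k.1 = N1 m then ch (p.2 = N2 m) else ch (p.1 = k.1) * ch (p.2 = N2 m))
   else if k.1 = N1 m then
    ch (p.2 = k.2) - (m+1) * (ch (p.1 = N2 m) * ch (p.2 = k.2)
      - ch (p.1 = N2 m) * ch (p.2 = N2 m)) - ch (p.2 = N2 m)
   else if k.1 = N2 m then ch (p.1 = N2 m) * ch (p.2 = k.2) - ch (p.1 = N2 m) * ch (p.2 = N2 m)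
   else ch (p.1 = k.1) * ch (p.2 = k.2) - ch (p.1 = k.1) * ch (p.2 = N2 m)
     - ch (p.1 = N2 m) * ch (p.2 = k.2) + ch (p.1 = N2 m) * ch (p.2 = N2 m))

/-- diagonal entries -/
def dd (k : P m) : ℕ :=
  if k.2 = N1 m then (if k.1 = N1 m then 2*(m+2)*(m+1) else 2*(m+1))
  else if k.2 = N2 m then 1
  else if k.1 = N1 m then 2*(m+1)
  else if k.1 = N2 m then 1
  else 2

/-- preimage vectors: rookAdj.mulVec (ww k) = dd k • column k of Bmat -/
def ww (k : P m) : P m → ℤ := fun p =>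
  if k.2 = N1 m then
    (if k.1 = N1 m then
       -((m+2)*(m+1)) * (ch (p.1 = N1 m) * ch (p.2 = N1 m))
         + (m+2) * ch (p.1 = N1 m) + (m+2) * ch (p.2 = N1 m) - 1
     else (ch (p.1 = k.1) - ch (p.1 = N1 m)) * (ch (¬ p.2 = N1 m) - m * ch (p.2 = N1 m)))
  else if k.2 = N2 m then
    (if k.1 = N1 m then ch (p.1 = N1 m) * ch (p.2 = N1 m)
     else ch (p.1 = k.1) * ch (p.2 = N1 m) - ch (p.1 = N1 m) * ch (p.2 = N1 m))
  else if k.1 = N1 m then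
    (ch (p.2 = k.2) - ch (p.2 = N1 m)) * (ch (¬ p.1 = N1 m) - m * ch (p.1 = N1 m))
  else if k.1 = N2 m then
    ch (p.1 = N1 m) * ch (p.2 = k.2) - ch (p.1 = N1 m) * ch (p.2 = N1 m)
  else ch (p.1 = k.1) * ch (p.2 = N1 m) + ch (p.1 = N1 m) * ch (p.2 = k.2)
    - ch (p.1 = k.1) * ch (p.2 = k.2) - ch (p.1 = N1 m) * ch (p.2 = N1 m)
-- tables
variable {m}
lemma sum_ch_not (a : Fin (m+3)) : ∑ i, ch (¬ i = a) = (m+2 : ℤ) := by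
  simp only [ch_not]
  rw [Finset.sum_sub_distrib, sum_ch, sum_one]
  ring

lemma sumS1 (c : ℤ) (b : Fin (m+3)) : ∑ x, c * ch (x = b) = c := by
  rw [← Finset.mul_sum, sum_ch, mul_one]
lemma sumS3 (c : ℤ) (b : Fin (m+3)) : ∑ x, c * ch (¬ x = b) = (m+2) * c := by
  rw [← Finset.mul_sum, sum_ch_not]; ring
lemma sumS0 (c : ℤ) : ∑ _x : Fin (m+3), c = (m+3) * c := by
  simp [Finset.card_univ]

lemma Tot_eq (v : P m → ℤ) : Tot m v = ∑ i, Rs m v i := Fintype.sum_prod_type _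

lemma Rs_colG (a b i : Fin (m+3)) : Rs m (colG m a b) i = 0 := by
  have h : ∀ j, colG m a b (i, j) = ch (i = a) * ch (j = b) - ch (i = a) * ch (j = N1 m)
      - ch (i = N1 m) * ch (j = b) + ch (i = N1 m) * ch (j = N1 m) := fun j => rfl
  simp only [Rs, h, Finset.sum_add_distrib, Finset.sum_sub_distrib, sumS1]
  ring
lemma Cs_colG (a b j : Fin (m+3)) : Cs m (colG m a b) j = 0 := by
  have h : ∀ i, colG m a b (i, j) = ch (j = b) * ch (i = a) - ch (j = N1 m) * ch (i = a)
      - ch (j = b) * ch (i = N1 m) + ch (j = N1 m) * ch (i = N1 m) := by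
    intro i; simp only [colG]; ring
  simp only [Cs, h, Finset.sum_add_distrib, Finset.sum_sub_distrib, sumS1]
  ring
lemma Tot_colG (a b : Fin (m+3)) : Tot m (colG m a b) = 0 := by
  simp [Tot_eq, Rs_colG]

lemma Rs_colU (a i : Fin (m+3)) : Rs m (colU m a) i = ch (i = a) - ch (i = N1 m) := by
  have h : ∀ j, colU m a (i, j) = ch (i = a) * ch (j = N1 m)
      - ch (i = N1 m) * ch (j = N1 m) := fun j => rfl
  simp only [Rs, h, Finset.sum_sub_distrib, sumS1]
lemma Cs_colU (a j : Fin (m+3)) : Cs m (colU m a) j = 0 := by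
  have h : ∀ i, colU m a (i, j) = ch (j = N1 m) * ch (i = a)
      - ch (j = N1 m) * ch (i = N1 m) := by intro i; simp only [colU]; ring
  simp only [Cs, h, Finset.sum_sub_distrib, sumS1]
  ring
lemma Tot_colU (a : Fin (m+3)) : Tot m (colU m a) = 0 := by
  simp only [Tot_eq, Rs_colU, Finset.sum_sub_distrib, sum_ch]
  ring

lemma Rs_colV (b i : Fin (m+3)) : Rs m (colV m b) i = 0 := by
  have h : ∀ j, colV m b (i, j) = ch (i = N1 m) * ch (j = b)
      - ch (i = N1 m) * ch (j = N1 m) := fun j => rfl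
  simp only [Rs, h, Finset.sum_sub_distrib, sumS1]
  ring
lemma Cs_colV (b j : Fin (m+3)) : Cs m (colV m b) j = ch (j = b) - ch (j = N1 m) := by
  have h : ∀ i, colV m b (i, j) = (ch (j = b) - ch (j = N1 m)) * ch (i = N1 m) := by
    intro i; simp only [colV]; ring
  simp only [Cs, h, sumS1]
lemma Tot_colV (b : Fin (m+3)) : Tot m (colV m b) = 0 := by
  simp [Tot_eq, Rs_colV]

lemma Rs_colZ (i : Fin (m+3)) : Rs m (colZ m) i = ch (i = N1 m) := by
  have h : ∀ j, colZ m (i, j) = ch (i = N1 m) * ch (j = N1 m) := fun j => rfl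
  simp only [Rs, h, sumS1]
lemma Cs_colZ (j : Fin (m+3)) : Cs m (colZ m) j = ch (j = N1 m) := by
  have h : ∀ i, colZ m (i, j) = ch (j = N1 m) * ch (i = N1 m) := by
    intro i; simp only [colZ]; ring
  simp only [Cs, h, sumS1]
lemma Tot_colZ : Tot m (colZ m) = 1 := by
  simp only [Tot_eq, Rs_colZ, sum_ch]

lemma Rs_colR2 (a i : Fin (m+3)) :
    Rs m (colR2 m a) i = (m+1) * (ch (i = a) - ch (i = N1 m)) := by
  have h : ∀ j, colR2 m a (i, j) = (ch (i = a) - ch (i = N1 m)) * ch (¬ j = N1 m)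
      - (ch (i = a) - ch (i = N1 m)) * ch (j = N1 m) := by
    intro j; simp only [colR2]; ring
  simp only [Rs, h, Finset.sum_sub_distrib, sumS1, sumS3]
  ring
lemma Cs_colR2 (a j : Fin (m+3)) : Cs m (colR2 m a) j = 0 := by
  have h : ∀ i, colR2 m a (i, j) = (ch (¬ j = N1 m) - ch (j = N1 m)) * ch (i = a)
      - (ch (¬ j = N1 m) - ch (j = N1 m)) * ch (i = N1 m) := by
    intro i; simp only [colR2]; ring
  simp only [Cs, h, Finset.sum_sub_distrib, sumS1]
  ring
lemma Tot_colR2 (a : Fin (m+3)) : Tot m (colR2 m a) = 0 := by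
  have h : ∀ i, Rs m (colR2 m a) i = (m+1 : ℤ) * ch (i = a) - (m+1) * ch (i = N1 m) := by
    intro i; rw [Rs_colR2]; ring
  simp only [Tot_eq, h, Finset.sum_sub_distrib, sumS1]
  ring

lemma Rs_colR3 (b i : Fin (m+3)) : Rs m (colR3 m b) i = 0 := by
  have h : ∀ j, colR3 m b (i, j) = (ch (¬ i = N1 m) - ch (i = N1 m)) * ch (j = b)
      - (ch (¬ i = N1 m) - ch (i = N1 m)) * ch (j = N1 m) := by
    intro j; simp only [colR3]; ring
  simp only [Rs, h, Finset.sum_sub_distrib, sumS1]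
  ring
lemma Cs_colR3 (b j : Fin (m+3)) :
    Cs m (colR3 m b) j = (m+1) * (ch (j = b) - ch (j = N1 m)) := by
  have h : ∀ i, colR3 m b (i, j) = (ch (j = b) - ch (j = N1 m)) * ch (¬ i = N1 m)
      - (ch (j = b) - ch (j = N1 m)) * ch (i = N1 m) := by
    intro i; simp only [colR3]; ring
  simp only [Cs, h, Finset.sum_sub_distrib, sumS1, sumS3]
  ring
lemma Tot_colR3 (b : Fin (m+3)) : Tot m (colR3 m b) = 0 := by
  simp [Tot_eq, Rs_colR3]

lemma Rs_colR4 (i : Fin (m+3)) :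
    Rs m (colR4 m) i = ch (¬ i = N1 m) + (m+2) * ch (i = N1 m) := by
  have h : ∀ j, colR4 m (i, j) = ch (¬ i = N1 m) * ch (j = N1 m)
      + ch (i = N1 m) * ch (¬ j = N1 m) := fun j => rfl
  simp only [Rs, h, Finset.sum_add_distrib, sumS1, sumS3]
lemma Cs_colR4 (j : Fin (m+3)) :
    Cs m (colR4 m) j = ch (¬ j = N1 m) + (m+2) * ch (j = N1 m) := by
  have h : ∀ i, colR4 m (i, j) = ch (j = N1 m) * ch (¬ i = N1 m)
      + ch (¬ j = N1 m) * ch (i = N1 m) := by intro i; simp only [colR4]; ring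
  simp only [Cs, h, Finset.sum_add_distrib, sumS1, sumS3]
  ring
lemma Tot_colR4 : Tot m (colR4 m) = 2*m+4 := by
  simp only [Tot_eq, Rs_colR4, Finset.sum_add_distrib, sumS1, sumS3, sum_ch, sum_ch_not]
  ring
-- pair sums
lemma pair_pt (a b : Fin (m+3)) (v : P m → ℤ) :
    ∑ p : P m, ch (p.1 = a) * ch (p.2 = b) * v p = v (a, b) := by
  rw [Fintype.sum_prod_type]
  simp only [ch, ite_mul, one_mul, zero_mul, Finset.sum_ite_irrel, Finset.sum_const_zero,
    Finset.sum_ite_eq', Finset.mem_univ, if_true]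
lemma pair_pt_c (c : ℤ) (a b : Fin (m+3)) (v : P m → ℤ) :
    ∑ p : P m, c * (ch (p.1 = a) * ch (p.2 = b) * v p) = c * v (a, b) := by
  rw [← Finset.mul_sum, pair_pt]
lemma pair_row (a : Fin (m+3)) (v : P m → ℤ) :
    ∑ p : P m, ch (p.1 = a) * v p = Rs m v a := by
  rw [Fintype.sum_prod_type]
  simp only [ch, ite_mul, one_mul, zero_mul, Finset.sum_ite_irrel, Finset.sum_const_zero,
    Finset.sum_ite_eq', Finset.mem_univ, if_true]
  rfl
lemma pair_col (b : Fin (m+3)) (v : P m → ℤ) :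
    ∑ p : P m, ch (p.2 = b) * v p = Cs m v b := by
  rw [Fintype.sum_prod_type]
  simp only [ch, ite_mul, one_mul, zero_mul, Finset.sum_ite_irrel, Finset.sum_const_zero,
    Finset.sum_ite_eq', Finset.mem_univ, if_true]
  rfl
lemma pair_col_c (c : ℤ) (b : Fin (m+3)) (v : P m → ℤ) :
    ∑ p : P m, c * (ch (p.2 = b) * v p) = c * Cs m v b := by
  rw [← Finset.mul_sum, pair_col]
lemma pair_tot (v : P m → ℤ) : ∑ p : P m, v p = Tot m v := rfl

/-- key: row k of Cmat dotted with v computes the coordinate functional lam k -/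
lemma dotC (k : P m) (v : P m → ℤ) : ∑ p, Cmat m k p * v p = lam m k v := by
  obtain ⟨a, b⟩ := k
  by_cases h1 : b = N1 m
  · subst h1
    by_cases h2 : a = N1 m
    · subst h2
      simp only [Cmat, lam, eq_self_iff_true, if_true]
      have h : ∀ p : P m, (1 - (2*(m:ℤ)+4) * ch (p.2 = N2 m)) * v p
          = v p - (2*(m:ℤ)+4) * (ch (p.2 = N2 m) * v p) := fun p => by ring
      simp only [h, Finset.sum_sub_distrib, pair_col_c]
      rfl
    · simp only [Cmat, lam, eq_self_iff_true, if_true, h2, if_false]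
      have h : ∀ p : P m, (ch (p.1 = a) - ((m:ℤ)+1) * (ch (p.1 = a) * ch (p.2 = N2 m))
            - ch (p.2 = N2 m)) * v p
          = ch (p.1 = a) * v p - ((m:ℤ)+1) * (ch (p.1 = a) * ch (p.2 = N2 m) * v p)
            - ch (p.2 = N2 m) * v p := fun p => by ring
      simp only [h, Finset.sum_sub_distrib, pair_row, pair_pt_c, pair_col]
      rfl
  · by_cases h3 : b = N2 m
    · subst h3
      by_cases h2 : a = N1 m
      · subst h2
        simp only [Cmat, lam, N2_ne_N1 m, if_false, eq_self_iff_true, if_true]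
        rw [pair_col]; rfl
      · simp only [Cmat, lam, N2_ne_N1 m, if_false, eq_self_iff_true, if_true, h2]
        rw [pair_pt]; rfl
    · by_cases h2 : a = N1 m
      · subst h2
        simp only [Cmat, lam, h1, h3, if_false, eq_self_iff_true, if_true]
        have h : ∀ p : P m, (ch (p.2 = b) - ((m:ℤ)+1) * (ch (p.1 = N2 m) * ch (p.2 = b)
              - ch (p.1 = N2 m) * ch (p.2 = N2 m)) - ch (p.2 = N2 m)) * v p
            = ch (p.2 = b) * v p - (((m:ℤ)+1) * (ch (p.1 = N2 m) * ch (p.2 = b) * v p)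
              - ((m:ℤ)+1) * (ch (p.1 = N2 m) * ch (p.2 = N2 m) * v p))
              - ch (p.2 = N2 m) * v p := fun p => by ring
        simp only [h, Finset.sum_sub_distrib, pair_col, pair_pt_c]
        simp only [lamV]; ring
      · by_cases h4 : a = N2 m
        · subst h4
          simp only [Cmat, lam, h1, h3, if_false, eq_self_iff_true, if_true, N2_ne_N1 m]
          have h : ∀ p : P m, (ch (p.1 = N2 m) * ch (p.2 = b)
                - ch (p.1 = N2 m) * ch (p.2 = N2 m)) * v p
              = ch (p.1 = N2 m) * ch (p.2 = b) * v p
                - ch (p.1 = N2 m) * ch (p.2 = N2 m) * v p := fun p => by ring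
          simp only [h, Finset.sum_sub_distrib, pair_pt]
          rfl
        · simp only [Cmat, lam, h1, h3, h2, h4, if_false]
          have h : ∀ p : P m, (ch (p.1 = a) * ch (p.2 = b) - ch (p.1 = a) * ch (p.2 = N2 m)
                - ch (p.1 = N2 m) * ch (p.2 = b) + ch (p.1 = N2 m) * ch (p.2 = N2 m)) * v p
              = ch (p.1 = a) * ch (p.2 = b) * v p - ch (p.1 = a) * ch (p.2 = N2 m) * v p
                - ch (p.1 = N2 m) * ch (p.2 = b) * v p
                + ch (p.1 = N2 m) * ch (p.2 = N2 m) * v p := fun p => by ring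
          simp only [h, Finset.sum_add_distrib, Finset.sum_sub_distrib, pair_pt]
          rfl
set_option maxHeartbeats 2000000 in
lemma CB : Cmat m * Bmat m = 1 := by
  ext k l
  rw [Matrix.mul_apply, Matrix.one_apply, dotC k (fun p => Bmat m p l)]
  obtain ⟨a', b'⟩ := l
  by_cases c1 : b' = N1 m
  · subst c1
    by_cases c2 : a' = N1 m
    · subst c2
      have hB : (fun p => Bmat m p (N1 m, N1 m)) = colZ m := by
        funext p; simp only [Bmat, eq_self_iff_true, if_true]
      rw [hB]
      obtain ⟨a, b⟩ := k
      simp only [lam, lamG, lamU, lamV, lamZ, lamR2, lamR3, lamR4,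
        Rs_colZ, Cs_colZ, Tot_colZ, colZ]
      simp [ch, Prod.ext_iff, Fin.ext_iff, N1, N2]
      split_ifs <;> omega
    · have hB : (fun p => Bmat m p (a', N1 m)) = colU m a' := by
        funext p; simp only [Bmat, eq_self_iff_true, if_true, c2, if_false]
      rw [hB]
      simp only [Fin.ext_iff, N1, N2] at c2
      obtain ⟨a, b⟩ := k
      simp only [lam, lamG, lamU, lamV, lamZ, lamR2, lamR3, lamR4,
        Rs_colU, Cs_colU, Tot_colU, colU]
      simp [ch, Prod.ext_iff, Fin.ext_iff, N1, N2]
      split_ifs <;> omega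
  · by_cases c3 : b' = N2 m
    · subst c3
      by_cases c2 : a' = N1 m
      · subst c2
        have hB : (fun p => Bmat m p (N1 m, N2 m)) = colR4 m := by
          funext p; simp only [Bmat, N2_ne_N1 m, if_false, eq_self_iff_true, if_true]
        rw [hB]
        obtain ⟨a, b⟩ := k
        simp only [lam, lamG, lamU, lamV, lamZ, lamR2, lamR3, lamR4,
          Rs_colR4, Cs_colR4, Tot_colR4, colR4]
        simp [ch, Prod.ext_iff, Fin.ext_iff, N1, N2]
        split_ifs <;> omega
      · have hB : (fun p => Bmat m p (a', N2 m)) = colR2 m a' := by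
          funext p; simp only [Bmat, N2_ne_N1 m, if_false, eq_self_iff_true, if_true, c2]
        rw [hB]
        simp only [Fin.ext_iff, N1, N2] at c2
        obtain ⟨a, b⟩ := k
        simp only [lam, lamG, lamU, lamV, lamZ, lamR2, lamR3, lamR4,
          Rs_colR2, Cs_colR2, Tot_colR2, colR2]
        simp [ch, Prod.ext_iff, Fin.ext_iff, N1, N2]
        split_ifs <;> omega
    · by_cases c2 : a' = N1 m
      · subst c2
        have hB : (fun p => Bmat m p (N1 m, b')) = colV m b' := by
          funext p; simp only [Bmat, c1, c3, if_false, eq_self_iff_true, if_true]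
        rw [hB]
        simp only [Fin.ext_iff, N1, N2] at c1 c3
        obtain ⟨a, b⟩ := k
        simp only [lam, lamG, lamU, lamV, lamZ, lamR2, lamR3, lamR4,
          Rs_colV, Cs_colV, Tot_colV, colV]
        simp [ch, Prod.ext_iff, Fin.ext_iff, N1, N2]
        split_ifs <;> omega
      · by_cases c4 : a' = N2 m
        · subst c4
          have hB : (fun p => Bmat m p (N2 m, b')) = colR3 m b' := by
            funext p; simp only [Bmat, c1, c3, N2_ne_N1 m, if_false, eq_self_iff_true, if_true]
          rw [hB]
          simp only [Fin.ext_iff, N1, N2] at c1 c3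
          obtain ⟨a, b⟩ := k
          simp only [lam, lamG, lamU, lamV, lamZ, lamR2, lamR3, lamR4,
            Rs_colR3, Cs_colR3, Tot_colR3, colR3]
          simp [ch, Prod.ext_iff, Fin.ext_iff, N1, N2]
          split_ifs <;> omega
        · have hB : (fun p => Bmat m p (a', b')) = colG m a' b' := by
            funext p; simp only [Bmat, c1, c3, c2, c4, if_false]
          rw [hB]
          simp only [Fin.ext_iff, N1, N2] at c1 c3 c2 c4
          obtain ⟨a, b⟩ := k
          simp only [lam, lamG, lamU, lamV, lamZ, lamR2, lamR3, lamR4,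
            Rs_colG, Cs_colG, Tot_colG, colG]
          simp [ch, Prod.ext_iff, Fin.ext_iff, N1, N2]
          split_ifs <;> omega
lemma rookAdj_eq (p q : P m) :
    rookAdj (m+3) p q
      = ch (q.1 = p.1) + ch (q.2 = p.2) - 2 * (ch (q.1 = p.1) * ch (q.2 = p.2)) := by
  by_cases h1 : q.1 = p.1 <;> by_cases h2 : q.2 = p.2 <;>
    simp [rookAdj, Prod.ext_iff, h1, h2, eq_comm, ch] <;> omega

lemma adj_mulVec (w : P m → ℤ) (p : P m) :
    (rookAdj (m+3)).mulVec w p = Rs m w p.1 + Cs m w p.2 - 2 * w p := by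
  unfold Matrix.mulVec dotProduct
  have h : ∀ q : P m, rookAdj (m+3) p q * w q
      = ch (q.1 = p.1) * w q + ch (q.2 = p.2) * w q
        - 2 * (ch (q.1 = p.1) * ch (q.2 = p.2) * w q) := by
    intro q; rw [rookAdj_eq]; ring
  simp only [h, Finset.sum_add_distrib, Finset.sum_sub_distrib, pair_row, pair_col, pair_pt_c]

lemma AmulW (k : P m) :
    (rookAdj (m+3)).mulVec (ww m k) = fun p => (dd m k : ℤ) * Bmat m p k := by
  funext p
  rw [adj_mulVec]
  obtain ⟨a, b⟩ := k
  by_cases c1 : b = N1 m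
  · subst c1
    by_cases c2 : a = N1 m
    · subst c2
      have hw : ww m (N1 m, N1 m) = fun q => (-((m:ℤ)+2)*((m:ℤ)+1)) * (ch (q.1 = N1 m) * ch (q.2 = N1 m))
          + ((m:ℤ)+2) * ch (q.1 = N1 m) + ((m:ℤ)+2) * ch (q.2 = N1 m) - 1 := by
        funext q; simp only [ww, eq_self_iff_true, if_true]; ring
      rw [hw]
      have hR : ∀ i, Rs m (fun q : P m => (-((m:ℤ)+2)*((m:ℤ)+1)) * (ch (q.1 = N1 m) * ch (q.2 = N1 m))
          + ((m:ℤ)+2) * ch (q.1 = N1 m) + ((m:ℤ)+2) * ch (q.2 = N1 m) - 1) i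
          = (2*(m:ℤ)+4) * ch (i = N1 m) - 1 := by
        intro i
        have h : ∀ j, (-((m:ℤ)+2)*((m:ℤ)+1)) * (ch (i = N1 m) * ch (j = N1 m))
            + ((m:ℤ)+2) * ch (i = N1 m) + ((m:ℤ)+2) * ch (j = N1 m) - 1
            = ((-((m:ℤ)+2)*((m:ℤ)+1)) * ch (i = N1 m) + ((m:ℤ)+2)) * ch (j = N1 m)
              + (((m:ℤ)+2) * ch (i = N1 m) - 1) := fun j => by ring
        simp only [Rs, h, Finset.sum_add_distrib, sumS1, sumS0]
        ring
      have hC : ∀ j, Cs m (fun q : P m => (-((m:ℤ)+2)*((m:ℤ)+1)) * (ch (q.1 = N1 m) * ch (q.2 = N1 m))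
          + ((m:ℤ)+2) * ch (q.1 = N1 m) + ((m:ℤ)+2) * ch (q.2 = N1 m) - 1) j
          = (2*(m:ℤ)+4) * ch (j = N1 m) - 1 := by
        intro j
        have h : ∀ i, (-((m:ℤ)+2)*((m:ℤ)+1)) * (ch (i = N1 m) * ch (j = N1 m))
            + ((m:ℤ)+2) * ch (i = N1 m) + ((m:ℤ)+2) * ch (j = N1 m) - 1
            = ((-((m:ℤ)+2)*((m:ℤ)+1)) * ch (j = N1 m) + ((m:ℤ)+2)) * ch (i = N1 m)
              + (((m:ℤ)+2) * ch (j = N1 m) - 1) := fun i => by ring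
        simp only [Cs, h, Finset.sum_add_distrib, sumS1, sumS0]
        ring
      rw [hR, hC]
      simp only [Bmat, dd, eq_self_iff_true, if_true, colZ]
      push_cast
      ring
    · have hw : ww m (a, N1 m) = fun q => (ch (q.1 = a) - ch (q.1 = N1 m))
          * (ch (¬ q.2 = N1 m) - (m:ℤ) * ch (q.2 = N1 m)) := by
        funext q; simp only [ww, eq_self_iff_true, if_true, c2, if_false]
      rw [hw]
      have hR : ∀ i, Rs m (fun q : P m => (ch (q.1 = a) - ch (q.1 = N1 m))
          * (ch (¬ q.2 = N1 m) - (m:ℤ) * ch (q.2 = N1 m))) i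
          = 2 * (ch (i = a) - ch (i = N1 m)) := by
        intro i
        have h : ∀ j, (ch (i = a) - ch (i = N1 m)) * (ch (¬ j = N1 m) - (m:ℤ) * ch (j = N1 m))
            = (ch (i = a) - ch (i = N1 m)) * ch (¬ j = N1 m)
              - ((ch (i = a) - ch (i = N1 m)) * (m:ℤ)) * ch (j = N1 m) := fun j => by ring
        simp only [Rs, h, Finset.sum_sub_distrib, sumS1, sumS3]
        ring
      have hC : ∀ j, Cs m (fun q : P m => (ch (q.1 = a) - ch (q.1 = N1 m))
          * (ch (¬ q.2 = N1 m) - (m:ℤ) * ch (q.2 = N1 m))) j = 0 := by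
        intro j
        have h : ∀ i, (ch (i = a) - ch (i = N1 m)) * (ch (¬ j = N1 m) - (m:ℤ) * ch (j = N1 m))
            = (ch (¬ j = N1 m) - (m:ℤ) * ch (j = N1 m)) * ch (i = a)
              - (ch (¬ j = N1 m) - (m:ℤ) * ch (j = N1 m)) * ch (i = N1 m) := fun i => by ring
        simp only [Cs, h, Finset.sum_sub_distrib, sumS1]
        ring
      rw [hR, hC]
      simp only [Bmat, dd, eq_self_iff_true, if_true, c2, if_false, colU, ch_not]
      push_cast
      ring
  · by_cases c3 : b = N2 m
    · subst c3
      by_cases c2 : a = N1 m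
      · subst c2
        have hw : ww m (N1 m, N2 m) = colZ m := by
          funext q; simp only [ww, colZ, N2_ne_N1 m, if_false, eq_self_iff_true, if_true]
        rw [hw, Rs_colZ, Cs_colZ]
        simp only [Bmat, dd, N2_ne_N1 m, if_false, eq_self_iff_true, if_true, colR4, colZ, ch_not]
        push_cast
        ring
      · have hw : ww m (a, N2 m) = colU m a := by
          funext q; simp only [ww, colU, N2_ne_N1 m, if_false, eq_self_iff_true, if_true, c2]
        rw [hw, Rs_colU, Cs_colU]
        simp only [Bmat, dd, N2_ne_N1 m, if_false, eq_self_iff_true, if_true, c2, colR2, colU, ch_not]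
        push_cast
        ring
    · by_cases c2 : a = N1 m
      · subst c2
        have hw : ww m (N1 m, b) = fun q => (ch (q.2 = b) - ch (q.2 = N1 m))
            * (ch (¬ q.1 = N1 m) - (m:ℤ) * ch (q.1 = N1 m)) := by
          funext q; simp only [ww, c1, c3, if_false, eq_self_iff_true, if_true]
        rw [hw]
        have hR : ∀ i, Rs m (fun q : P m => (ch (q.2 = b) - ch (q.2 = N1 m))
            * (ch (¬ q.1 = N1 m) - (m:ℤ) * ch (q.1 = N1 m))) i = 0 := by
          intro i
          have h : ∀ j, (ch (j = b) - ch (j = N1 m)) * (ch (¬ i = N1 m) - (m:ℤ) * ch (i = N1 m))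
              = (ch (¬ i = N1 m) - (m:ℤ) * ch (i = N1 m)) * ch (j = b)
                - (ch (¬ i = N1 m) - (m:ℤ) * ch (i = N1 m)) * ch (j = N1 m) := fun j => by ring
          simp only [Rs, h, Finset.sum_sub_distrib, sumS1]
          ring
        have hC : ∀ j, Cs m (fun q : P m => (ch (q.2 = b) - ch (q.2 = N1 m))
            * (ch (¬ q.1 = N1 m) - (m:ℤ) * ch (q.1 = N1 m))) j
            = 2 * (ch (j = b) - ch (j = N1 m)) := by
          intro j
          have h : ∀ i, (ch (j = b) - ch (j = N1 m)) * (ch (¬ i = N1 m) - (m:ℤ) * ch (i = N1 m))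
              = (ch (j = b) - ch (j = N1 m)) * ch (¬ i = N1 m)
                - ((ch (j = b) - ch (j = N1 m)) * (m:ℤ)) * ch (i = N1 m) := fun i => by ring
          simp only [Cs, h, Finset.sum_sub_distrib, sumS1, sumS3]
          ring
        rw [hR, hC]
        simp only [Bmat, dd, c1, c3, if_false, eq_self_iff_true, if_true, colV, ch_not]
        push_cast
        ring
      · by_cases c4 : a = N2 m
        · subst c4
          have hw : ww m (N2 m, b) = colV m b := by
            funext q
            simp only [ww, colV, c1, c3, N2_ne_N1 m, if_false, eq_self_iff_true, if_true]
          rw [hw, Rs_colV, Cs_colV]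
          simp only [Bmat, dd, c1, c3, N2_ne_N1 m, if_false, eq_self_iff_true, if_true,
            colR3, colV, ch_not]
          push_cast
          ring
        · have hw : ww m (a, b) = fun q => ch (q.1 = a) * ch (q.2 = N1 m)
              + ch (q.1 = N1 m) * ch (q.2 = b) - ch (q.1 = a) * ch (q.2 = b)
              - ch (q.1 = N1 m) * ch (q.2 = N1 m) := by
            funext q; simp only [ww, c1, c3, c2, c4, if_false]
          rw [hw]
          have hR : ∀ i, Rs m (fun q : P m => ch (q.1 = a) * ch (q.2 = N1 m)
              + ch (q.1 = N1 m) * ch (q.2 = b) - ch (q.1 = a) * ch (q.2 = b)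
              - ch (q.1 = N1 m) * ch (q.2 = N1 m)) i = 0 := by
            intro i
            have h : ∀ j, ch (i = a) * ch (j = N1 m) + ch (i = N1 m) * ch (j = b)
                - ch (i = a) * ch (j = b) - ch (i = N1 m) * ch (j = N1 m)
                = (ch (i = a) * ch (j = N1 m) + ch (i = N1 m) * ch (j = b))
                  - (ch (i = a) * ch (j = b) + ch (i = N1 m) * ch (j = N1 m)) := fun j => by ring
            simp only [Rs, h, Finset.sum_sub_distrib, Finset.sum_add_distrib, sumS1]
            ring
          have hC : ∀ j, Cs m (fun q : P m => ch (q.1 = a) * ch (q.2 = N1 m)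
              + ch (q.1 = N1 m) * ch (q.2 = b) - ch (q.1 = a) * ch (q.2 = b)
              - ch (q.1 = N1 m) * ch (q.2 = N1 m)) j = 0 := by
            intro j
            have h : ∀ i, ch (i = a) * ch (j = N1 m) + ch (i = N1 m) * ch (j = b)
                - ch (i = a) * ch (j = b) - ch (i = N1 m) * ch (j = N1 m)
                = (ch (j = N1 m) * ch (i = a) + ch (j = b) * ch (i = N1 m))
                  - (ch (j = b) * ch (i = a) + ch (j = N1 m) * ch (i = N1 m)) := fun i => by ring
            simp only [Cs, h, Finset.sum_sub_distrib, Finset.sum_add_distrib, sumS1]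
            ring
          rw [hR, hC]
          simp only [Bmat, dd, c1, c3, c2, c4, if_false, colG]
          push_cast
          ring
lemma rookAdj_eq' (p l : P m) :
    rookAdj (m+3) p l
      = ch (p.1 = l.1) + ch (p.2 = l.2) - 2 * (ch (p.1 = l.1) * ch (p.2 = l.2)) := by
  by_cases h1 : p.1 = l.1 <;> by_cases h2 : p.2 = l.2 <;>
    simp [rookAdj, Prod.ext_iff, h1, h2, ch]

lemma Rs_Acol (l : P m) (i : Fin (m+3)) :
    Rs m (fun p => rookAdj (m+3) p l) i = ((m:ℤ)+1) * ch (i = l.1) + 1 := by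
  have h : ∀ j, rookAdj (m+3) (i, j) l
      = (1 - 2 * ch (i = l.1)) * ch (j = l.2) + ch (i = l.1) := by
    intro j; rw [rookAdj_eq']; ring
  simp only [Rs, h, Finset.sum_add_distrib, sumS1, sumS0]
  ring
lemma Cs_Acol (l : P m) (j : Fin (m+3)) :
    Cs m (fun p => rookAdj (m+3) p l) j = ((m:ℤ)+1) * ch (j = l.2) + 1 := by
  have h : ∀ i, rookAdj (m+3) (i, j) l
      = (1 - 2 * ch (j = l.2)) * ch (i = l.1) + ch (j = l.2) := by
    intro i; rw [rookAdj_eq']; ring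
  simp only [Cs, h, Finset.sum_add_distrib, sumS1, sumS0]
  ring
lemma Tot_Acol (l : P m) :
    Tot m (fun p => rookAdj (m+3) p l) = 2*(m:ℤ)+4 := by
  have h : ∀ i, Rs m (fun p => rookAdj (m+3) p l) i
      = ((m:ℤ)+1) * ch (i = l.1) + 1 := Rs_Acol l
  simp only [Tot_eq, h, Finset.sum_add_distrib, sumS1, sumS0]
  ring

lemma CAdvd (k l : P m) : (dd m k : ℤ) ∣ (Cmat m * rookAdj (m+3)) k l := by
  rw [Matrix.mul_apply]
  rw [show ∑ p, Cmat m k p * rookAdj (m+3) p l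
      = lam m k (fun p => rookAdj (m+3) p l) from dotC k _]
  obtain ⟨a, b⟩ := k
  by_cases c1 : b = N1 m
  · subst c1
    by_cases c2 : a = N1 m
    · subst c2
      simp only [lam, eq_self_iff_true, if_true, lamZ, Tot_Acol, Cs_Acol, dd]
      exact ⟨-ch (N2 m = l.2), by push_cast; ring⟩
    · simp only [lam, eq_self_iff_true, if_true, c2, if_false, lamU, Rs_Acol, Cs_Acol, dd]
      rw [rookAdj_eq']
      exact ⟨ch (a = l.1) * ch (N2 m = l.2) - ch (N2 m = l.2), by push_cast; ring⟩
  · by_cases c3 : b = N2 m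
    · subst c3
      simp only [lam, c1, if_false, dd, N2_ne_N1 m, eq_self_iff_true, if_true, Nat.cast_one]
      exact one_dvd _
    · by_cases c2 : a = N1 m
      · subst c2
        simp only [lam, c1, c3, if_false, eq_self_iff_true, if_true, lamV, Cs_Acol, dd]
        rw [rookAdj_eq', rookAdj_eq']
        exact ⟨ch (N2 m = l.1) * ch (b = l.2) - ch (N2 m = l.1) * ch (N2 m = l.2),
          by push_cast; ring⟩
      · by_cases c4 : a = N2 m
        · subst c4
          simp only [lam, c1, c3, dd, N2_ne_N1 m, eq_self_iff_true, if_false, if_true,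
            Nat.cast_one]
          exact one_dvd _
        · simp only [lam, c1, c3, c2, c4, if_false, lamG, dd]
          rw [rookAdj_eq', rookAdj_eq', rookAdj_eq', rookAdj_eq']
          exact ⟨-(ch (a = l.1) * ch (b = l.2) - ch (a = l.1) * ch (N2 m = l.2)
            - ch (N2 m = l.1) * ch (b = l.2) + ch (N2 m = l.1) * ch (N2 m = l.2)),
            by push_cast; ring⟩
variable (m)

lemma BC : Bmat m * Cmat m = 1 := mul_eq_one_comm.mpr CB

-- target group
abbrev Tm := (Fin ((m+1)^2) → ZMod 2) × (Fin (2*m+3) → ZMod (2*(m+1)))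
  × ZMod (2*(m+2)*(m+1))

def emb1 (p : Fin ((m+1)^2)) : P m :=
  (⟨p.val / (m+1), by
      have : p.val / (m+1) < m+1 := Nat.div_lt_of_lt_mul (by simpa [pow_two] using p.isLt)
      omega⟩,
   ⟨p.val % (m+1), by have := Nat.mod_lt p.val (show 0 < m+1 by omega); omega⟩)

def emb2 (q : Fin (2*m+3)) : P m :=
  if h : q.val < m+2 then (⟨q.val, by omega⟩, N1 m)
  else (N1 m, ⟨q.val - (m+2), by have := q.isLt; omega⟩)

lemma dd_emb1 (p : Fin ((m+1)^2)) : dd m (emb1 m p) = 2 := by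
  have h1 : p.val / (m+1) < m+1 := Nat.div_lt_of_lt_mul (by simpa [pow_two] using p.isLt)
  have h2 : p.val % (m+1) < m+1 := Nat.mod_lt _ (by omega)
  unfold dd
  rw [if_neg, if_neg, if_neg, if_neg] <;> simp [emb1, Fin.ext_iff, N1, N2] <;> omega

lemma dd_emb2 (q : Fin (2*m+3)) : dd m (emb2 m q) = 2*(m+1) := by
  by_cases h : q.val < m+2
  · simp only [emb2, dif_pos h, dd, eq_self_iff_true, if_true]
    rw [if_neg]
    simp [Fin.ext_iff, N1]; omega
  · have hq := q.isLt
    simp only [emb2, dif_neg h, dd]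
    split_ifs <;> simp_all [Fin.ext_iff, N1, N2] <;> omega

lemma dd_zz : dd m (N1 m, N1 m) = 2*(m+2)*(m+1) := by simp [dd]

-- the homomorphism to the target group
def phi0 : (P m → ℤ) →+ Tm m where
  toFun x := (fun p => (((Cmat m).mulVec x (emb1 m p) : ℤ) : ZMod 2),
              fun q => (((Cmat m).mulVec x (emb2 m q) : ℤ) : ZMod (2*(m+1))),
              (((Cmat m).mulVec x (N1 m, N1 m) : ℤ) : ZMod (2*(m+2)*(m+1))))
  map_zero' := by
    simp only [Matrix.mulVec_zero, Pi.zero_apply, Int.cast_zero]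
    rfl
  map_add' x y := by
    simp only [Matrix.mulVec_add, Pi.add_apply, Int.cast_add]
    rfl

def phi : (P m → ℤ) →ₗ[ℤ] Tm m := (phi0 m).toIntLinearMap

lemma phi_apply (x : P m → ℤ) : phi m x
    = (fun p => (((Cmat m).mulVec x (emb1 m p) : ℤ) : ZMod 2),
       fun q => (((Cmat m).mulVec x (emb2 m q) : ℤ) : ZMod (2*(m+1))),
       (((Cmat m).mulVec x (N1 m, N1 m) : ℤ) : ZMod (2*(m+2)*(m+1)))) := rfl

-- an explicit section of the slot embeddings
def ysec (F : Fin ((m+1)^2) → ℤ) (G : Fin (2*m+3) → ℤ) (cz : ℤ) : P m → ℤ := fun k =>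
  if h1 : k.2 = N1 m then
    (if h2 : k.1 = N1 m then cz
     else G ⟨k.1.val, by have := k.1.isLt; omega⟩)
  else if h2 : k.2 = N2 m then 0
  else if h3 : k.1 = N1 m then
    G ⟨m+2+k.2.val, by
      have h4 := k.2.isLt
      simp only [Fin.ext_iff, N1, N2] at h1 h2
      omega⟩
  else if h4 : k.1 = N2 m then 0
  else F ⟨k.1.val*(m+1)+k.2.val, by
      have h5 := k.1.isLt
      have h6 := k.2.isLt
      simp only [Fin.ext_iff, N1, N2] at h1 h2 h3 h4
      have ha : k.1.val ≤ m := by omega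
      have hb : k.2.val ≤ m := by omega
      have hc : k.1.val*(m+1) ≤ m*(m+1) := Nat.mul_le_mul_right _ ha
      rw [pow_two]
      nlinarith⟩

lemma ysec_emb1 (F : Fin ((m+1)^2) → ℤ) (G : Fin (2*m+3) → ℤ) (cz : ℤ)
    (p : Fin ((m+1)^2)) : ysec m F G cz (emb1 m p) = F p := by
  have h1 : p.val / (m+1) < m+1 := Nat.div_lt_of_lt_mul (by simpa [pow_two] using p.isLt)
  have h2 : p.val % (m+1) < m+1 := Nat.mod_lt _ (by omega)
  simp only [ysec]
  rw [dif_neg, dif_neg, dif_neg, dif_neg]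
  · congr 1
    apply Fin.ext
    show (p.val / (m+1)) * (m+1) + p.val % (m+1) = p.val
    rw [Nat.mul_comm]
    exact Nat.div_add_mod _ _
  all_goals simp [emb1, Fin.ext_iff, N1, N2]
  all_goals omega

lemma ysec_emb2 (F : Fin ((m+1)^2) → ℤ) (G : Fin (2*m+3) → ℤ) (cz : ℤ)
    (q : Fin (2*m+3)) : ysec m F G cz (emb2 m q) = G q := by
  by_cases h : q.val < m+2
  · rw [show emb2 m q = (⟨q.val, by omega⟩, N1 m) from dif_pos h]
    have hne : (⟨q.val, by omega⟩ : Fin (m+3)) ≠ N1 m := by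
      simp [Fin.ext_iff, N1]; omega
    simp [ysec, hne, Fin.eta]
  · have hq := q.isLt
    rw [show emb2 m q = (N1 m, ⟨q.val - (m+2), by omega⟩) from dif_neg h]
    have h1 : (⟨q.val - (m+2), by omega⟩ : Fin (m+3)) ≠ N1 m := by
      simp [Fin.ext_iff, N1]; omega
    have h2 : (⟨q.val - (m+2), by omega⟩ : Fin (m+3)) ≠ N2 m := by
      simp [Fin.ext_iff, N2]; omega
    have hval : m+2+(q.val-(m+2)) = q.val := by omega
    simp [ysec, h1, h2, hval, Fin.eta]

lemma ysec_z (F : Fin ((m+1)^2) → ℤ) (G : Fin (2*m+3) → ℤ) (cz : ℤ) :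
    ysec m F G cz (N1 m, N1 m) = cz := by
  simp [ysec]

lemma phi_surjective : Function.Surjective (phi m) := by
  rintro ⟨f, g, c⟩
  choose F hF using fun p => ZMod.intCast_surjective (f p)
  choose G hG using fun q => ZMod.intCast_surjective (g q)
  obtain ⟨cz, hcz⟩ := ZMod.intCast_surjective c
  refine ⟨(Bmat m).mulVec (ysec m F G cz), ?_⟩
  rw [phi_apply, Matrix.mulVec_mulVec, CB, Matrix.one_mulVec]
  refine Prod.ext ?_ (Prod.ext ?_ ?_)
  · funext p
    show ((ysec m F G cz (emb1 m p) : ℤ) : ZMod 2) = f p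
    rw [ysec_emb1]; exact hF p
  · funext q
    show ((ysec m F G cz (emb2 m q) : ℤ) : ZMod (2*(m+1))) = g q
    rw [ysec_emb2]; exact hG q
  · show ((ysec m F G cz (N1 m, N1 m) : ℤ) : ZMod (2*(m+2)*(m+1))) = c
    rw [ysec_z]; exact hcz
lemma range_le :
    LinearMap.range (rookAdj (m+3)).mulVecLin ≤ LinearMap.ker (phi m) := by
  rintro x ⟨t, rfl⟩
  rw [LinearMap.mem_ker, Matrix.mulVecLin_apply, phi_apply]
  have hdvd : ∀ k : P m, (dd m k : ℤ) ∣ ((Cmat m).mulVec ((rookAdj (m+3)).mulVec t)) k := by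
    intro k
    rw [Matrix.mulVec_mulVec]
    have he : (Cmat m * rookAdj (m+3)).mulVec t k
        = ∑ l, (Cmat m * rookAdj (m+3)) k l * t l := rfl
    rw [he]
    exact Finset.dvd_sum (fun l _ => Dvd.dvd.mul_right (CAdvd k l) _)
  refine Prod.ext ?_ (Prod.ext ?_ ?_)
  · funext p
    show (((Cmat m).mulVec ((rookAdj (m+3)).mulVec t) (emb1 m p) : ℤ) : ZMod 2) = 0
    rw [ZMod.intCast_zmod_eq_zero_iff_dvd]
    have := hdvd (emb1 m p)
    rw [dd_emb1] at this
    exact_mod_cast this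
  · funext q
    show (((Cmat m).mulVec ((rookAdj (m+3)).mulVec t) (emb2 m q) : ℤ) : ZMod (2*(m+1))) = 0
    rw [ZMod.intCast_zmod_eq_zero_iff_dvd]
    have := hdvd (emb2 m q)
    rw [dd_emb2] at this
    exact_mod_cast this
  · show (((Cmat m).mulVec ((rookAdj (m+3)).mulVec t) (N1 m, N1 m) : ℤ)
        : ZMod (2*(m+2)*(m+1))) = 0
    rw [ZMod.intCast_zmod_eq_zero_iff_dvd]
    have := hdvd (N1 m, N1 m)
    rw [dd_zz] at this
    exact_mod_cast this

lemma ker_le :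
    LinearMap.ker (phi m) ≤ LinearMap.range (rookAdj (m+3)).mulVecLin := by
  intro x hx
  rw [LinearMap.mem_ker, phi_apply, Prod.ext_iff, Prod.ext_iff] at hx
  obtain ⟨hx1, hx2, hx3⟩ := hx
  have h1 : ∀ p, (((Cmat m).mulVec x (emb1 m p) : ℤ) : ZMod 2) = 0 :=
    fun p => congrFun hx1 p
  have h2 : ∀ q, (((Cmat m).mulVec x (emb2 m q) : ℤ) : ZMod (2*(m+1))) = 0 :=
    fun q => congrFun hx2 q
  -- divisibility at every slot
  have hdvd : ∀ k : P m, (dd m k : ℤ) ∣ ((Cmat m).mulVec x) k := by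
    intro k
    obtain ⟨a, b⟩ := k
    by_cases c1 : b = N1 m
    · subst c1
      by_cases c2 : a = N1 m
      · subst c2
        rw [dd_zz]
        have h3 : (((Cmat m).mulVec x (N1 m, N1 m) : ℤ) : ZMod (2*(m+2)*(m+1))) = 0 := hx3
        rw [ZMod.intCast_zmod_eq_zero_iff_dvd] at h3
        exact_mod_cast h3
      · have ha : a.val < m+2 := by
          have := a.isLt
          simp only [Fin.ext_iff, N1] at c2
          omega
        have hemb : emb2 m ⟨a.val, by omega⟩ = (a, N1 m) := by
          rw [show emb2 m ⟨a.val, by omega⟩ = (⟨a.val, by omega⟩, N1 m) from dif_pos ha]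
        have hz := h2 ⟨a.val, by omega⟩
        rw [hemb, ZMod.intCast_zmod_eq_zero_iff_dvd] at hz
        have hd : dd m (a, N1 m) = 2*(m+1) := by
          simp only [dd, eq_self_iff_true, if_true, c2, if_false]
        rw [hd]
        exact_mod_cast hz
    · by_cases c3 : b = N2 m
      · subst c3
        have hd : dd m (a, N2 m) = 1 := by
          simp only [dd, N2_ne_N1 m, if_false, eq_self_iff_true, if_true]
        rw [hd]
        exact one_dvd _
      · by_cases c2 : a = N1 m
        · subst c2
          have hb : b.val ≤ m := by
            have := b.isLt
            simp only [Fin.ext_iff, N1, N2] at c1 c3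
            omega
          have hemb : emb2 m ⟨m+2+b.val, by omega⟩ = (N1 m, b) := by
            rw [show emb2 m ⟨m+2+b.val, by omega⟩
                = (N1 m, ⟨m+2+b.val - (m+2), by omega⟩)
                from dif_neg (show ¬ (m+2+b.val < m+2) by omega)]
            simp [Prod.ext_iff, Fin.ext_iff]
          have hz := h2 ⟨m+2+b.val, by omega⟩
          rw [hemb, ZMod.intCast_zmod_eq_zero_iff_dvd] at hz
          have hd : dd m (N1 m, b) = 2*(m+1) := by
            simp only [dd, c1, c3, if_false, eq_self_iff_true, if_true]
          rw [hd]
          exact_mod_cast hz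
        · by_cases c4 : a = N2 m
          · subst c4
            have hd : dd m (N2 m, b) = 1 := by
              simp only [dd, c1, c3, N2_ne_N1 m, if_false, eq_self_iff_true, if_true]
            rw [hd]
            exact one_dvd _
          · have hb : b.val ≤ m := by
              have := b.isLt
              simp only [Fin.ext_iff, N1, N2] at c1 c3
              omega
            have ha : a.val ≤ m := by
              have := a.isLt
              simp only [Fin.ext_iff, N1, N2] at c2 c4
              omega
            have hidx : a.val*(m+1)+b.val < (m+1)^2 := by
              have hc : a.val*(m+1) ≤ m*(m+1) := Nat.mul_le_mul_right _ ha
              rw [pow_two]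
              nlinarith
            have hemb : emb1 m ⟨a.val*(m+1)+b.val, hidx⟩ = (a, b) := by
              simp only [emb1, Prod.ext_iff, Fin.ext_iff]
              constructor
              · show (a.val*(m+1)+b.val) / (m+1) = a.val
                rw [Nat.add_comm, Nat.add_mul_div_right _ _ (show 0 < m+1 by omega),
                  Nat.div_eq_of_lt (show b.val < m+1 by omega)]
                omega
              · show (a.val*(m+1)+b.val) % (m+1) = b.val
                rw [Nat.add_comm, Nat.add_mul_mod_self_right,
                  Nat.mod_eq_of_lt (show b.val < m+1 by omega)]
            have hz := h1 ⟨a.val*(m+1)+b.val, hidx⟩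
            rw [hemb, ZMod.intCast_zmod_eq_zero_iff_dvd] at hz
            have hd : dd m (a, b) = 2 := by
              simp only [dd, c1, c3, c2, c4, if_false]
            rw [hd]
            exact_mod_cast hz
  -- build the preimage
  refine ⟨fun p => ∑ k, (((Cmat m).mulVec x) k / (dd m k : ℤ)) * ww m k p, ?_⟩
  rw [Matrix.mulVecLin_apply]
  funext p
  have e1 : (rookAdj (m+3)).mulVec
      (fun r => ∑ k, (((Cmat m).mulVec x) k / (dd m k : ℤ)) * ww m k r) p
      = ∑ q, rookAdj (m+3) p q
        * ∑ k, (((Cmat m).mulVec x) k / (dd m k : ℤ)) * ww m k q := rfl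
  rw [e1]
  have e2 : ∀ q, rookAdj (m+3) p q
      * ∑ k, (((Cmat m).mulVec x) k / (dd m k : ℤ)) * ww m k q
      = ∑ k, (((Cmat m).mulVec x) k / (dd m k : ℤ)) * (rookAdj (m+3) p q * ww m k q) := by
    intro q
    rw [Finset.mul_sum]
    exact Finset.sum_congr rfl (fun k _ => by ring)
  rw [Finset.sum_congr rfl (fun q _ => e2 q), Finset.sum_comm]
  have e3 : ∀ k : P m, ∑ q, (((Cmat m).mulVec x) k / (dd m k : ℤ))
      * (rookAdj (m+3) p q * ww m k q)
      = ((Cmat m).mulVec x) k * Bmat m p k := by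
    intro k
    rw [← Finset.mul_sum]
    have : ∑ q, rookAdj (m+3) p q * ww m k q = (rookAdj (m+3)).mulVec (ww m k) p := rfl
    rw [this]
    have hA := congrFun (AmulW k) p
    rw [hA, ← mul_assoc, Int.ediv_mul_cancel (hdvd k)]
  rw [Finset.sum_congr rfl (fun k _ => e3 k)]
  have e4 : ∑ k, ((Cmat m).mulVec x) k * Bmat m p k
      = (Bmat m).mulVec ((Cmat m).mulVec x) p := by
    exact Finset.sum_congr rfl (fun k _ => by rw [mul_comm])
  rw [e4, Matrix.mulVec_mulVec, BC, Matrix.one_mulVec]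

lemma range_eq_ker :
    LinearMap.range (rookAdj (m+3)).mulVecLin = LinearMap.ker (phi m) :=
  le_antisymm (range_le m) (ker_le m)

end RookSmith

/-- The Smith group of the rook's graph (the cokernel of its adjacency matrix over `ℤ`)
is `(ℤ/2)^{(n-2)²} ⊕ (ℤ/2(n-2))^{2n-3} ⊕ ℤ/2(n-1)(n-2)`. -/
theorem rook_smith_group (n : ℕ) (hn : 3 ≤ n) :
    Nonempty
      (((Fin n × Fin n → ℤ) ⧸ LinearMap.range (rookAdj n).mulVecLin) ≃+
        ((Fin ((n - 2) ^ 2) → ZMod 2) × (Fin (2 * n - 3) → ZMod (2 * (n - 2))) ×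
          ZMod (2 * (n - 1) * (n - 2)))) := by
  obtain ⟨m, rfl⟩ : ∃ m, n = m + 3 := ⟨n - 3, by omega⟩
  exact ⟨((Submodule.quotEquivOfEq _ _ (RookSmith.range_eq_ker m)).trans
    ((RookSmith.phi m).quotKerEquivOfSurjective (RookSmith.phi_surjective m))).toAddEquiv⟩
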